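/- For every ρ > 1, ∫_0^{π/2} I₁( (log ρ / 2)·cos θ ) dθ = (ρ − 2√ρ + 1)/(√ρ · log ρ). -/

import Mathlib

open MeasureTheory Filter Real

lemma cos_pow_int (n : ℕ) : ∫ x in (0:ℝ)..(Real.pi/2), Real.cos x ^ (2*n+1)
    = 4^n * ((Nat.factorial n : ℝ))^2 / (Nat.factorial (2*n+1)) := by
  induction n with
  | zero => simp
  | succ k ih =>
    have h : 2 * (k+1) + 1 = (2*k+1) + 2 := by ring
    rw [h, integral_cos_pow, ih, Real.cos_pi_div_two, Real.sin_zero]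
    have h4 : (Nat.factorial (2*k) : ℝ) ≠ 0 := by positivity
    have h5 : (Nat.factorial k : ℝ) ≠ 0 := by positivity
    simp only [Nat.factorial_succ]
    push_cast
    field_simp
    ring

/-- The modified Bessel function of the first kind
`I₁(x) = ∑ (x/2)^{2n+1} / (n!·(n+1)!)`. -/
noncomputable def I1 (x : ℝ) : ℝ :=
  ∑' n : ℕ, (x / 2) ^ (2 * n + 1) / ((Nat.factorial n : ℝ) * (Nat.factorial (n + 1) : ℝ))

theorem stmt14 (ρ : ℝ) (hρ : 1 < ρ) :
    ∫ θ in (0 : ℝ)..(Real.pi / 2), I1 ((Real.log ρ / 2) * Real.cos θ)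
      = (ρ - 2 * Real.sqrt ρ + 1) / (Real.sqrt ρ * Real.log ρ) := by
  have hρ0 : 0 < ρ := lt_trans one_pos hρ
  have hlog : 0 < Real.log ρ := Real.log_pos hρ
  set a := Real.log ρ / 2 with ha
  have ha0 : 0 < a := by positivity
  have hsq : Real.exp a ^ 2 = ρ := by
    rw [sq, ← Real.exp_add, show a + a = Real.log ρ by rw [ha]; ring, Real.exp_log hρ0]
  have hs : Real.sqrt ρ = Real.exp a := by
    rw [← hsq, Real.sqrt_sq (Real.exp_pos a).le]
  have hle : (0:ℝ) ≤ Real.pi / 2 := by positivity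
  set F : ℕ → ℝ → ℝ := fun n θ =>
    (a * Real.cos θ / 2) ^ (2*n+1) / ((Nat.factorial n : ℝ) * (Nat.factorial (n+1) : ℝ)) with hF
  have hcont : ∀ n, Continuous (F n) := fun n => by
    apply Continuous.div_const
    exact (Continuous.mul continuous_const Real.continuous_cos).div_const 2 |>.pow _
  have hFi : ∀ n, Integrable (F n) (volume.restrict (Set.Ioc (0:ℝ) (Real.pi/2))) :=
    fun n => (hcont n).integrableOn_Ioc
  -- summability of integrals of norms
  have hbound : ∀ n θ, ‖F n θ‖ ≤ (a/2)^(2*n+1) / ((Nat.factorial n : ℝ) * (Nat.factorial (n+1))) := by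
    intro n θ
    have hnum : ‖a * Real.cos θ / 2‖ ≤ a/2 := by
      rw [Real.norm_eq_abs, abs_div, abs_mul, abs_of_nonneg ha0.le, abs_two]
      have h := abs_cos_le_one θ
      have h2 := abs_nonneg (Real.cos θ)
      nlinarith
    have h1 : (0:ℝ) < (Nat.factorial n : ℝ) * (Nat.factorial (n+1)) := by positivity
    rw [hF, norm_div, norm_pow, Real.norm_of_nonneg h1.le]
    gcongr
  have hgsum : Summable (fun n : ℕ =>
      (Real.pi/2) * ((a/2)^(2*n+1) / ((Nat.factorial n : ℝ) * (Nat.factorial (n+1))))) := by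
    refine Summable.of_nonneg_of_le (fun n => by positivity) (fun n => ?_)
      ((Real.summable_pow_div_factorial ((a/2)^2)).mul_left (Real.pi/2*(a/2)))
    have hp : (a/2)^(2*n+1) = ((a/2)^2)^n * (a/2) := by rw [pow_succ, pow_mul]
    have hone : (1:ℝ) ≤ (Nat.factorial (n+1) : ℝ) := by
      exact_mod_cast Nat.one_le_iff_ne_zero.mpr (Nat.factorial_ne_zero _)
    calc Real.pi/2 * ((a/2)^(2*n+1) / ((Nat.factorial n : ℝ) * (Nat.factorial (n+1))))
        ≤ Real.pi/2 * ((a/2)^(2*n+1) / ((Nat.factorial n : ℝ) * 1)) := by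
          gcongr
        _ = (Real.pi/2 * (a/2)) * (((a/2)^2)^n / (Nat.factorial n : ℝ)) := by
          rw [hp]; ring
  have hF_sum : Summable fun n => ∫ θ in Set.Ioc (0:ℝ) (Real.pi/2), ‖F n θ‖ := by
    refine Summable.of_nonneg_of_le
      (fun n => integral_nonneg fun θ => norm_nonneg _) (fun n => ?_) hgsum
    calc ∫ θ in Set.Ioc (0:ℝ) (Real.pi/2), ‖F n θ‖
        ≤ ∫ _ in Set.Ioc (0:ℝ) (Real.pi/2),
            (a/2)^(2*n+1) / ((Nat.factorial n : ℝ) * (Nat.factorial (n+1))) :=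
          integral_mono (hFi n).norm (integrable_const _) (fun θ => hbound n θ)
      _ = (Real.pi/2) * ((a/2)^(2*n+1) / ((Nat.factorial n : ℝ) * (Nat.factorial (n+1)))) := by
          rw [setIntegral_const, Real.volume_real_Ioc, smul_eq_mul, sub_zero, max_eq_left hle]
  -- per-term integrals
  have key : ∀ n : ℕ, ∫ θ in Set.Ioc (0:ℝ) (Real.pi/2), F n θ
      = a^(2*n+1) / (Nat.factorial (2*n+2) : ℝ) := by
    intro n
    rw [← intervalIntegral.integral_of_le hle]
    have : ∀ θ, F n θ = ((a/2)^(2*n+1) / ((Nat.factorial n : ℝ) * (Nat.factorial (n+1))))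
        * Real.cos θ ^ (2*n+1) := by
      intro θ; simp only [hF]
      rw [show a * Real.cos θ / 2 = (a/2) * Real.cos θ by ring, mul_pow]
      ring
    simp_rw [this]
    rw [intervalIntegral.integral_const_mul, cos_pow_int]
    have e4 : (4:ℝ)^n = 2^(2*n) := by rw [show (4:ℝ) = 2^2 by norm_num, ← pow_mul]
    have e2 : (2:ℝ)^(2*n+1) = 2 * 2^(2*n) := by rw [pow_succ]; ring
    have hf1 : (Nat.factorial n : ℝ) ≠ 0 := by positivity
    have hf2 : (Nat.factorial (2*n+1) : ℝ) ≠ 0 := by positivity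
    have c1 : ((Nat.factorial (2*n+2)) : ℝ) = (2*n+2) * (Nat.factorial (2*n+1)) := by
      rw [show 2*n+2 = (2*n+1)+1 by ring, Nat.factorial_succ]; push_cast; ring
    have c2 : ((Nat.factorial (n+1)) : ℝ) = (n+1) * (Nat.factorial n) := by
      rw [Nat.factorial_succ]; push_cast; ring
    rw [div_pow, e2, e4, c1, c2]
    field_simp
  -- the cosh sum
  have hsum : HasSum (fun n : ℕ => a ^ (2*n+1) / (Nat.factorial (2*n+2) : ℝ))
      ((Real.cosh a - 1)/a) := by
    have h1 := Real.hasSum_cosh a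
    have h2 : HasSum (fun n : ℕ => a^(2*(n+1)) / (Nat.factorial (2*(n+1)) : ℝ))
        (Real.cosh a - 1) := by
      have := (hasSum_nat_add_iff' (f := fun n => a^(2*n) / (Nat.factorial (2*n) : ℝ)) 1).mpr h1
      simpa using this
    have h3 := h2.div_const a
    have heq : (fun n : ℕ => a ^ (2*n+1) / (Nat.factorial (2*n+2) : ℝ))
        = fun n : ℕ => a^(2*(n+1)) / (Nat.factorial (2*(n+1)) : ℝ) / a := by
      funext n
      have hp : a^(2*(n+1)) = a^(2*n+1) * a := by
        rw [show 2*(n+1) = (2*n+1)+1 by ring, pow_succ]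
      have hf : Nat.factorial (2*(n+1)) = Nat.factorial (2*n+2) := by
        rw [show 2*(n+1) = 2*n+2 by ring]
      rw [hp, hf]
      field_simp
    rw [heq]
    exact h3
  -- put it together
  rw [intervalIntegral.integral_of_le hle]
  have hI : ∀ θ, I1 (a * Real.cos θ) = ∑' n, F n θ := fun θ => rfl
  simp_rw [hI]
  rw [← integral_tsum_of_summable_integral_norm hFi hF_sum]
  simp_rw [key]
  rw [hsum.tsum_eq, Real.cosh_eq, hs, show Real.log ρ = 2*a by rw [ha]; ring,
    ← hsq, Real.exp_neg]
  have he : Real.exp a ≠ 0 := (Real.exp_pos a).ne'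
  field_simp
  ring
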